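/- (NOFOB with conservative step.) Suppose Assumption 1 holds, each M_k : H → H is 1-strongly monotone w.r.t. ‖·‖_P and L_M-Lipschitz continuous w.r.t. ‖·‖, S is a bounded self-adjoint strongly positive linear operator on H, and θ_k ∈ (0, 2) with liminf_{k→∞} θ_k(2 − θ_k) > 0. Suppose ε_μ > 0 and for every k the constant μ̂_k satisfies μ̂_k ≥ ε_μ and the global bound μ̂_k·‖M_k x − M_k y‖²_{S⁻¹} ≤ ⟨M_k x − M_k y, x − y⟩ − (β/4)‖x − y‖_P² for all x, y ∈ H with x ≠ y. Let x_0 ∈ H and for each k let x̂_k be the unique point with M_k x_k − C x_k − M_k x̂_k ∈ A x̂_k, and set x_{k+1} := x_k − θ_k μ̂_k S⁻¹(M_k x_k − M_k x̂_k). Then x_k converges weakly to some x̄ ∈ zer(A + C). -/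

import Mathlib

open Filter Topology

/-- The norm `‖x‖_P := √⟨x, Px⟩` induced by a bounded self-adjoint strongly positive
linear operator `P`. -/
noncomputable def pnorm {H : Type*} [NormedAddCommGroup H] [InnerProductSpace ℝ H]
    (P : H →L[ℝ] H) (x : H) : ℝ := Real.sqrt (inner ℝ x (P x))

/-- A set-valued operator (identified with its graph) is monotone. -/
def IsMonotoneOp {H : Type*} [NormedAddCommGroup H] [InnerProductSpace ℝ H]
    (A : H → Set H) : Prop :=
  ∀ ⦃x u y v⦄, u ∈ A x → v ∈ A y → (0:ℝ) ≤ inner ℝ (u - v) (x - y)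

/-- A set-valued operator is maximally monotone. -/
def IsMaxMonotoneOp {H : Type*} [NormedAddCommGroup H] [InnerProductSpace ℝ H]
    (A : H → Set H) : Prop :=
  IsMonotoneOp A ∧ ∀ x u, (∀ y v, v ∈ A y → (0:ℝ) ≤ inner ℝ (u - v) (x - y)) → u ∈ A x

/-- Weak convergence of a sequence in a Hilbert space. -/
def WeakConvergesTo {H : Type*} [NormedAddCommGroup H] [InnerProductSpace ℝ H]
    (x : ℕ → H) (xbar : H) : Prop :=
  ∀ y : H, Tendsto (fun k => (inner ℝ (x k) y : ℝ)) atTop (nhds (inner ℝ xbar y))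

section Helpers
variable {H : Type*} [NormedAddCommGroup H] [InnerProductSpace ℝ H]

/-- Cauchy–Schwarz for a positive symmetric operator. -/
lemma pos_cauchy_schwarz (T : H →L[ℝ] H)
    (hsymm : ∀ a b : H, (inner ℝ (T a) b : ℝ) = inner ℝ a (T b))
    (hpos : ∀ v : H, (0:ℝ) ≤ inner ℝ v (T v)) (u v : H) :
    (inner ℝ u (T v) : ℝ) ≤ Real.sqrt (inner ℝ u (T u)) * Real.sqrt (inner ℝ v (T v)) := by
  have key : ∀ t : ℝ, 0 ≤ (inner ℝ v (T v) : ℝ) * (t * t) + (2 * inner ℝ u (T v)) * t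
      + (inner ℝ u (T u) : ℝ) := by
    intro t
    have h0 := hpos (u + t • v)
    have hexp : (inner ℝ (u + t • v) (T (u + t • v)) : ℝ)
        = (inner ℝ v (T v) : ℝ) * (t * t) + (2 * inner ℝ u (T v)) * t + (inner ℝ u (T u) : ℝ) := by
      simp only [map_add, map_smul, inner_add_add_self, inner_add_left, inner_add_right,
        real_inner_smul_left, real_inner_smul_right]
      have h1 : (inner ℝ v (T u) : ℝ) = inner ℝ u (T v) := by
        rw [← hsymm v u, real_inner_comm]
      ring_nf
      rw [h1]
      ring
    linarith [hexp ▸ h0]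
  have hdisc := discrim_le_zero key
  have h2 : (2 * (inner ℝ u (T v) : ℝ)) ^ 2 ≤ 4 * (inner ℝ v (T v) : ℝ) * inner ℝ u (T u) := by
    rw [discrim] at hdisc; nlinarith [hdisc]
  have h3 : (inner ℝ u (T v) : ℝ) ^ 2 ≤ (inner ℝ u (T u) : ℝ) * inner ℝ v (T v) := by nlinarith
  calc (inner ℝ u (T v) : ℝ) ≤ |(inner ℝ u (T v) : ℝ)| := le_abs_self _
    _ = Real.sqrt ((inner ℝ u (T v) : ℝ) ^ 2) := (Real.sqrt_sq_eq_abs _).symm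
    _ ≤ Real.sqrt ((inner ℝ u (T u) : ℝ) * inner ℝ v (T v)) := Real.sqrt_le_sqrt h3
    _ = Real.sqrt (inner ℝ u (T u)) * Real.sqrt (inner ℝ v (T v)) :=
        Real.sqrt_mul (hpos u) _

/-- Limit of a bounded real sequence along an ultrafilter. -/
lemma ultrafilter_limit_bounded (U : Ultrafilter ℕ) (f : ℕ → ℝ) (c : ℝ)
    (hf : ∀ k, |f k| ≤ c) : ∃ a, |a| ≤ c ∧ Tendsto f (U : Filter ℕ) (nhds a) := by
  have hmem : (↑(U.map f) : Filter ℝ) ≤ Filter.principal (Set.Icc (-c) c) := by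
    rw [Filter.le_principal_iff, Ultrafilter.mem_coe, Ultrafilter.mem_map]
    exact Filter.univ_mem' (fun k => abs_le.mp (hf k))
  obtain ⟨a, ha, hle⟩ := (isCompact_Icc (a := -c) (b := c)).ultrafilter_le_nhds
    (U.map f) hmem
  refine ⟨a, abs_le.mpr ha, ?_⟩
  rwa [Filter.Tendsto, ← Ultrafilter.coe_map]


/-- A bounded sequence in a Hilbert space has a weak limit along any ultrafilter. -/
lemma exists_weak_ultrafilter_limit {H : Type*} [NormedAddCommGroup H]
    [InnerProductSpace ℝ H] [CompleteSpace H]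
    (U : Ultrafilter ℕ) (v : ℕ → H) (c : ℝ) (hb : ∀ k, ‖v k‖ ≤ c) :
    ∃ p : H, ∀ y : H, Tendsto (fun k => (inner ℝ (v k) y : ℝ)) (U : Filter ℕ)
      (nhds (inner ℝ p y)) := by
  have hbd : ∀ y : H, ∀ k, |(inner ℝ (v k) y : ℝ)| ≤ c * ‖y‖ := fun y k =>
    (abs_real_inner_le_norm _ _).trans
      (mul_le_mul_of_nonneg_right (hb k) (norm_nonneg _))
  choose φ hφabs hφ using fun y : H =>
    ultrafilter_limit_bounded U (fun k => (inner ℝ (v k) y : ℝ)) (c * ‖y‖) (hbd y)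
  have hadd : ∀ y z : H, φ (y + z) = φ y + φ z := by
    intro y z
    refine tendsto_nhds_unique (hφ (y + z)) ?_
    have := (hφ y).add (hφ z)
    simpa [inner_add_right] using this
  have hsmul : ∀ (t : ℝ) (y : H), φ (t • y) = t * φ y := by
    intro t y
    refine tendsto_nhds_unique (hφ (t • y)) ?_
    have := (hφ y).const_mul t
    simpa [real_inner_smul_right] using this
  let F : H →L[ℝ] H →L[ℝ] ℝ := 0
  let φL : H →ₗ[ℝ] ℝ :=
    { toFun := φ, map_add' := hadd, map_smul' := fun t y => by simp [hsmul t y] }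
  let φC : H →L[ℝ] ℝ := LinearMap.mkContinuous φL c (fun y => by
    simpa [φL] using hφabs y)
  refine ⟨(InnerProductSpace.toDual ℝ H).symm φC, fun y => ?_⟩
  have : (inner ℝ ((InnerProductSpace.toDual ℝ H).symm φC) y : ℝ) = φC y :=
    InnerProductSpace.toDual_symm_apply
  rw [this]
  exact hφ y


variable {H : Type*} [NormedAddCommGroup H] [InnerProductSpace ℝ H]

lemma pnorm_sq_eq (T : H →L[ℝ] H) (x : H) (h : (0:ℝ) ≤ inner ℝ x (T x)) :
    pnorm T x ^ 2 = (inner ℝ x (T x) : ℝ) := Real.sq_sqrt h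

lemma apply_inv_eq (T Tinv : H →L[ℝ] H)
    (h : T.comp Tinv = ContinuousLinearMap.id ℝ H) (v : H) : T (Tinv v) = v := by
  have := ContinuousLinearMap.ext_iff.mp h v
  simpa using this

lemma inv_symm (T Tinv : H →L[ℝ] H)
    (hsymm : ∀ a b : H, (inner ℝ (T a) b : ℝ) = inner ℝ a (T b))
    (h₁ : T.comp Tinv = ContinuousLinearMap.id ℝ H) (a b : H) :
    (inner ℝ (Tinv a) b : ℝ) = inner ℝ a (Tinv b) := by
  conv_lhs => rw [← apply_inv_eq T Tinv h₁ b]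
  rw [← hsymm (Tinv a) (Tinv b), apply_inv_eq T Tinv h₁ a]

lemma inv_pos_nonneg (T Tinv : H →L[ℝ] H)
    (hpos : ∀ v : H, (0:ℝ) ≤ inner ℝ v (T v))
    (h₁ : T.comp Tinv = ContinuousLinearMap.id ℝ H) (v : H) :
    (0:ℝ) ≤ inner ℝ v (Tinv v) := by
  have : (inner ℝ v (Tinv v) : ℝ) = inner ℝ (Tinv v) (T (Tinv v)) := by
    rw [apply_inv_eq T Tinv h₁, real_inner_comm]
  rw [this]; exact hpos (Tinv v)

lemma inv_pos_bound (T Tinv : H →L[ℝ] H)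
    (hpos : ∃ c > 0, ∀ v : H, c * ‖v‖ ^ 2 ≤ inner ℝ v (T v))
    (h₁ : T.comp Tinv = ContinuousLinearMap.id ℝ H) :
    ∃ c > 0, ∀ v : H, c * ‖v‖ ^ 2 ≤ inner ℝ v (Tinv v) := by
  obtain ⟨c, hc, h⟩ := hpos
  set m : ℝ := max 1 (‖T‖ ^ 2) with hm
  have hm1 : (1:ℝ) ≤ m := le_max_left _ _
  have hmpos : (0:ℝ) < m := lt_of_lt_of_le one_pos hm1
  refine ⟨c / m, div_pos hc hmpos, fun v => ?_⟩
  have hv : ‖v‖ ^ 2 ≤ m * ‖Tinv v‖ ^ 2 := by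
    have h1 : ‖v‖ ≤ ‖T‖ * ‖Tinv v‖ := by
      conv_lhs => rw [← apply_inv_eq T Tinv h₁ v]
      exact T.le_opNorm _
    have h2 : ‖v‖ ^ 2 ≤ ‖T‖ ^ 2 * ‖Tinv v‖ ^ 2 := by
      nlinarith [norm_nonneg v, norm_nonneg (Tinv v), norm_nonneg T]
    have h3 : ‖T‖ ^ 2 ≤ m := le_max_right _ _
    nlinarith [sq_nonneg ‖Tinv v‖]
  have hkey : c * ‖Tinv v‖ ^ 2 ≤ inner ℝ v (Tinv v) := by
    have : (inner ℝ v (Tinv v) : ℝ) = inner ℝ (Tinv v) (T (Tinv v)) := by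
      rw [apply_inv_eq T Tinv h₁, real_inner_comm]
    rw [this]; exact h (Tinv v)
  have : c / m * ‖v‖ ^ 2 ≤ c * ‖Tinv v‖ ^ 2 := by
    rw [div_mul_eq_mul_div, div_le_iff₀ hmpos]
    nlinarith
  linarith

/-- generalized Cauchy–Schwarz: `⟪a, c⟫ ≤ ‖a‖_{P⁻¹} ‖c‖_P`. -/
lemma inner_le_pnorm_mul_pnorm (P Pinv : H →L[ℝ] H)
    (hsymm : ∀ a b : H, (inner ℝ (P a) b : ℝ) = inner ℝ a (P b))
    (hpos : ∀ v : H, (0:ℝ) ≤ inner ℝ v (P v))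
    (hinvpos : ∀ v : H, (0:ℝ) ≤ inner ℝ v (Pinv v))
    (h₁ : P.comp Pinv = ContinuousLinearMap.id ℝ H) (a c : H) :
    (inner ℝ a c : ℝ) ≤ pnorm Pinv a * pnorm P c := by
  have h0 : (inner ℝ a c : ℝ) = inner ℝ (Pinv a) (P c) := by
    conv_lhs => rw [← apply_inv_eq P Pinv h₁ a]
    exact hsymm (Pinv a) c
  have hCS := pos_cauchy_schwarz P hsymm hpos (Pinv a) c
  have h2 : (inner ℝ (Pinv a) (P (Pinv a)) : ℝ) = inner ℝ a (Pinv a) := by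
    rw [apply_inv_eq P Pinv h₁, real_inner_comm]
  rw [h0]
  calc (inner ℝ (Pinv a) (P c) : ℝ)
      ≤ Real.sqrt (inner ℝ (Pinv a) (P (Pinv a))) * Real.sqrt (inner ℝ c (P c)) := hCS
    _ = pnorm Pinv a * pnorm P c := by rw [h2]; rfl

lemma fejer_identity (S Sinv : H →L[ℝ] H)
    (hSsymm : ∀ a b : H, (inner ℝ (S a) b : ℝ) = inner ℝ a (S b))
    (h₁ : S.comp Sinv = ContinuousLinearMap.id ℝ H) (a w : H) (t : ℝ) :
    (inner ℝ (a - t • Sinv w) (S (a - t • Sinv w)) : ℝ)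
      = inner ℝ a (S a) - 2 * t * inner ℝ w a + t ^ 2 * inner ℝ w (Sinv w) := by
  have e1 : (inner ℝ (Sinv w) (S a) : ℝ) = inner ℝ w a := by
    rw [← hSsymm (Sinv w) a, apply_inv_eq S Sinv h₁ w]
  have e2 : (inner ℝ a (S (Sinv w)) : ℝ) = inner ℝ w a := by
    rw [apply_inv_eq S Sinv h₁, real_inner_comm]
  have e3 : (inner ℝ (Sinv w) (S (Sinv w)) : ℝ) = inner ℝ w (Sinv w) := by
    conv_lhs => rw [apply_inv_eq S Sinv h₁]
    exact real_inner_comm _ _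
  simp only [map_sub, map_smul, inner_sub_left, inner_sub_right,
    real_inner_smul_left, real_inner_smul_right, e1, e2, e3]
  ring

lemma young_coco {β s r : ℝ} (hβ : 0 < β) (hs : 0 ≤ s) (hr : 0 ≤ r) :
    -(β / 4) * r ^ 2 ≤ (1 / β) * s ^ 2 - s * r := by
  have h := sq_nonneg (s - β * r / 2)
  have h2 : 0 ≤ (1 / β) * (s - β * r / 2) ^ 2 := by positivity
  have : (1 / β) * (s - β * r / 2) ^ 2
      = (1 / β) * s ^ 2 - s * r + (β / 4) * r ^ 2 := by
    field_simp
    ring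
  linarith [this ▸ h2]


lemma inner_w_lower_bound
    (P Pinv Sinv : H →L[ℝ] H)
    (hPsymm : ∀ a b : H, (inner ℝ (P a) b : ℝ) = inner ℝ a (P b))
    (hPpos : ∀ v : H, (0:ℝ) ≤ inner ℝ v (P v))
    (hPinvpos : ∀ v : H, (0:ℝ) ≤ inner ℝ v (Pinv v))
    (hPinv₁ : P.comp Pinv = ContinuousLinearMap.id ℝ H)
    (hSinvpos : ∀ v : H, (0:ℝ) ≤ inner ℝ v (Sinv v))
    (A : H → Set H) (hA1 : IsMonotoneOp A)
    (β : ℝ) (hβ0 : 0 ≤ β)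
    (C : H → H) (hC0 : β = 0 → ∀ x y : H, C x = C y)
    (hCpos : 0 < β → ∀ x y : H,
      (1 / β) * pnorm Pinv (C x - C y) ^ 2 ≤ inner ℝ (C x - C y) (x - y))
    (z : H) (hz : -C z ∈ A z)
    (Mk : H → H) (μ : ℝ)
    (hμG : ∀ x y : H, x ≠ y → μ * pnorm Sinv (Mk x - Mk y) ^ 2 ≤
      (inner ℝ (Mk x - Mk y) (x - y) : ℝ) - β / 4 * pnorm P (x - y) ^ 2)
    (xk xhk : H) (hmem : Mk xk - C xk - Mk xhk ∈ A xhk) :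
    μ * (inner ℝ (Mk xk - Mk xhk) (Sinv (Mk xk - Mk xhk)) : ℝ)
      ≤ inner ℝ (Mk xk - Mk xhk) (xk - z) := by
  by_cases heq : xk = xhk
  · subst heq
    simp
  · -- monotonicity of A
    have h1 := hA1 hmem hz
    have h1' : (inner ℝ (C xk - C z) (xhk - z) : ℝ)
        ≤ inner ℝ (Mk xk - Mk xhk) (xhk - z) := by
      have hrw : Mk xk - C xk - Mk xhk - -C z
          = (Mk xk - Mk xhk) - (C xk - C z) := by abel
      rw [hrw, inner_sub_left] at h1
      linarith
    -- cocoercivity estimate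
    have h2 : -(β / 4) * pnorm P (xk - xhk) ^ 2
        ≤ (inner ℝ (C xk - C z) (xhk - z) : ℝ) := by
      rcases lt_or_eq_of_le hβ0 with hβpos | hβzero
      · have hsplit : (inner ℝ (C xk - C z) (xhk - z) : ℝ)
            = inner ℝ (C xk - C z) (xk - z) - inner ℝ (C xk - C z) (xk - xhk) := by
          rw [← inner_sub_right]
          congr 1
          abel
        have hco := hCpos hβpos xk z
        have hcs := inner_le_pnorm_mul_pnorm P Pinv hPsymm hPpos hPinvpos hPinv₁
          (C xk - C z) (xk - xhk)
        have hy := young_coco (β := β) (s := pnorm Pinv (C xk - C z))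
          (r := pnorm P (xk - xhk)) hβpos (Real.sqrt_nonneg _) (Real.sqrt_nonneg _)
        rw [hsplit]
        linarith
      · have hCeq : C xk - C z = 0 := sub_eq_zero.mpr (hC0 hβzero.symm xk z)
        rw [hCeq, ← hβzero]
        simp
    -- conservative step bound
    have h3 := hμG xk xhk heq
    rw [pnorm_sq_eq Sinv _ (hSinvpos _)] at h3
    have h4 : (inner ℝ (Mk xk - Mk xhk) (xk - z) : ℝ)
        = inner ℝ (Mk xk - Mk xhk) (xk - xhk) + inner ℝ (Mk xk - Mk xhk) (xhk - z) := by
      rw [← inner_add_right]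
      congr 1
      abel
    rw [h4]
    linarith


lemma norm_tendsto_zero_of_sq_le {l : Filter ℕ} (v : ℕ → H) (g : ℕ → ℝ) (c : ℝ)
    (hc : 0 < c) (h : ∀ k, c * ‖v k‖ ^ 2 ≤ g k) (hg : Tendsto g l (nhds 0)) :
    Tendsto (fun k => ‖v k‖) l (nhds 0) := by
  have hle : ∀ k, ‖v k‖ ≤ Real.sqrt (g k / c) := by
    intro k
    have h1 : ‖v k‖ ^ 2 ≤ g k / c := by
      rw [le_div_iff₀ hc]; linarith [h k]
    calc ‖v k‖ = Real.sqrt (‖v k‖ ^ 2) := (Real.sqrt_sq (norm_nonneg _)).symm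
      _ ≤ Real.sqrt (g k / c) := Real.sqrt_le_sqrt h1
  have hgc : Tendsto (fun k => Real.sqrt (g k / c)) l (nhds 0) := by
    have h2 : Tendsto (fun k => g k / c) l (nhds 0) := by
      simpa using hg.div_const c
    have := (Real.continuous_sqrt.tendsto 0).comp h2
    simpa [Function.comp_def] using this
  exact squeeze_zero (fun k => norm_nonneg _) hle hgc

lemma inner_tendsto_of_strong_weak {l : Filter ℕ} (a b : ℕ → H) (aL bL : H) (Bb : ℝ)
    (hb : ∀ k, ‖b k‖ ≤ Bb)
    (ha : Tendsto (fun k => ‖a k - aL‖) l (nhds 0))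
    (hbw : ∀ y : H, Tendsto (fun k => (inner ℝ (b k) y : ℝ)) l (nhds (inner ℝ bL y))) :
    Tendsto (fun k => (inner ℝ (a k) (b k) : ℝ)) l (nhds (inner ℝ aL bL)) := by
  have h1 : Tendsto (fun k => (inner ℝ (a k - aL) (b k) : ℝ)) l (nhds 0) := by
    refine squeeze_zero_norm (fun k => ?_) (by simpa using ha.mul_const Bb)
    calc ‖(inner ℝ (a k - aL) (b k) : ℝ)‖ = |(inner ℝ (a k - aL) (b k) : ℝ)| := rfl
      _ ≤ ‖a k - aL‖ * ‖b k‖ := abs_real_inner_le_norm _ _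
      _ ≤ ‖a k - aL‖ * Bb := by
          have : (0:ℝ) ≤ ‖a k - aL‖ := norm_nonneg _
          exact mul_le_mul_of_nonneg_left (hb k) this
  have h2 : Tendsto (fun k => (inner ℝ aL (b k) : ℝ)) l (nhds (inner ℝ aL bL)) := by
    have := hbw aL
    simp only [real_inner_comm] at this ⊢
    exact this
  have h3 := h1.add h2
  rw [zero_add] at h3
  refine h3.congr (fun k => ?_)
  rw [← inner_add_left]
  congr 1
  abel

end Helpers



set_option maxHeartbeats 1500000 in
/-- convergence of NOFOB with conservative step (Algorithm 3). -/
theorem nofob_conservative_step_convergence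
    {H : Type*} [NormedAddCommGroup H] [InnerProductSpace ℝ H] [CompleteSpace H]
    (P Pinv S Sinv : H →L[ℝ] H)
    (hPsa : IsSelfAdjoint P) (hSsa : IsSelfAdjoint S)
    (hPpos : ∃ c > 0, ∀ x : H, c * ‖x‖ ^ 2 ≤ inner ℝ x (P x))
    (hSpos : ∃ c > 0, ∀ x : H, c * ‖x‖ ^ 2 ≤ inner ℝ x (S x))
    (hPinv₁ : P.comp Pinv = ContinuousLinearMap.id ℝ H)
    (hPinv₂ : Pinv.comp P = ContinuousLinearMap.id ℝ H)
    (hSinv₁ : S.comp Sinv = ContinuousLinearMap.id ℝ H)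
    (hSinv₂ : Sinv.comp S = ContinuousLinearMap.id ℝ H)
    -- Assumption 1
    (A : H → Set H) (hA : IsMaxMonotoneOp A)
    (β : ℝ) (hβ0 : 0 ≤ β) (hβ4 : β < 4)
    (C : H → H)
    (hC0 : β = 0 → ∀ x y : H, C x = C y)
    (hCpos : 0 < β → ∀ x y : H,
      (1 / β) * pnorm Pinv (C x - C y) ^ 2 ≤ inner ℝ (C x - C y) (x - y))
    (hzer : ∃ x : H, -C x ∈ A x)
    -- kernels M_k
    (M : ℕ → H → H) (L_M : ℝ)
    (hMsm : ∀ k, ∀ x y : H, pnorm P (x - y) ^ 2 ≤ inner ℝ (M k x - M k y) (x - y))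
    (hMlip : ∀ k, ∀ x y : H, ‖M k x - M k y‖ ≤ L_M * ‖x - y‖)
    -- relaxation parameters
    (θ : ℕ → ℝ) (hθ : ∀ k, 0 < θ k ∧ θ k < 2)
    (hθliminf : 0 < Filter.liminf (fun k => θ k * (2 - θ k)) atTop)
    -- conservative step-lengths
    (μh : ℕ → ℝ) (εμ : ℝ) (hεμ : 0 < εμ)
    (hμhLB : ∀ k, εμ ≤ μh k)
    (hμhGlobal : ∀ k, ∀ x y : H, x ≠ y →
      μh k * pnorm Sinv (M k x - M k y) ^ 2 ≤
        (inner ℝ (M k x - M k y) (x - y) : ℝ) - β / 4 * pnorm P (x - y) ^ 2)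
    -- the algorithm
    (x xh : ℕ → H)
    (hxh : ∀ k, M k (x k) - C (x k) - M k (xh k) ∈ A (xh k))
    (hupd : ∀ k, x (k + 1) = x k - (θ k * μh k) • Sinv (M k (x k) - M k (xh k))) :
    ∃ xbar : H, -C xbar ∈ A xbar ∧ WeakConvergesTo x xbar := by
  classical
  -- symmetric bilinear facts
  have hPsymm : ∀ a b : H, (inner ℝ (P a) b : ℝ) = inner ℝ a (P b) := fun a b => by
    have := (ContinuousLinearMap.isSelfAdjoint_iff_isSymmetric.mp hPsa) a b
    simpa using this
  have hSsymm : ∀ a b : H, (inner ℝ (S a) b : ℝ) = inner ℝ a (S b) := fun a b => by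
    have := (ContinuousLinearMap.isSelfAdjoint_iff_isSymmetric.mp hSsa) a b
    simpa using this
  obtain ⟨cP, hcP, hPlb⟩ := hPpos
  obtain ⟨cS, hcS, hSlb⟩ := hSpos
  have hPposv : ∀ v : H, (0:ℝ) ≤ inner ℝ v (P v) := fun v =>
    le_trans (by positivity) (hPlb v)
  have hSposv : ∀ v : H, (0:ℝ) ≤ inner ℝ v (S v) := fun v =>
    le_trans (by positivity) (hSlb v)
  obtain ⟨cPinv, hcPinv, hPinvlb⟩ := inv_pos_bound P Pinv ⟨cP, hcP, hPlb⟩ hPinv₁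
  obtain ⟨cSinv, hcSinv, hSinvlb⟩ := inv_pos_bound S Sinv ⟨cS, hcS, hSlb⟩ hSinv₁
  have hPinvposv : ∀ v : H, (0:ℝ) ≤ inner ℝ v (Pinv v) := fun v =>
    le_trans (by positivity) (hPinvlb v)
  have hSinvposv : ∀ v : H, (0:ℝ) ≤ inner ℝ v (Sinv v) := fun v =>
    le_trans (by positivity) (hSinvlb v)
  -- basic sequences
  set w : ℕ → H := fun k => M k (x k) - M k (xh k) with hw
  set q : ℕ → ℝ := fun k => (inner ℝ (w k) (Sinv (w k)) : ℝ) with hq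
  have hq0 : ∀ k, 0 ≤ q k := fun k => hSinvposv (w k)
  set fd : H → ℕ → ℝ := fun z k => (inner ℝ (x k - z) (S (x k - z)) : ℝ) with hfd
  have hfd0 : ∀ z k, 0 ≤ fd z k := fun z k => hSposv _
  -- per-step lower bound
  have hlow : ∀ z : H, -C z ∈ A z → ∀ k, μh k * q k ≤ inner ℝ (w k) (x k - z) :=
    fun z hz k =>
      inner_w_lower_bound P Pinv Sinv hPsymm hPposv hPinvposv hPinv₁ hSinvposv
        A hA.1 β hβ0 C hC0 hCpos z hz (M k) (μh k) (hμhGlobal k) (x k) (xh k) (hxh k)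
  -- Fejér step
  have hfstep : ∀ z : H, -C z ∈ A z → ∀ k,
      fd z (k + 1) ≤ fd z k - θ k * (2 - θ k) * μh k ^ 2 * q k := by
    intro z hz k
    have hx1 : x (k + 1) - z = (x k - z) - (θ k * μh k) • Sinv (w k) := by
      rw [hupd k]; abel
    have hid := fejer_identity S Sinv hSsymm hSinv₁ (x k - z) (w k) (θ k * μh k)
    have hfd1 : fd z (k + 1) = fd z k - 2 * (θ k * μh k) * inner ℝ (w k) (x k - z)
        + (θ k * μh k) ^ 2 * q k := by
      rw [hfd]; dsimp only; rw [hx1, hid]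
    have hlo := hlow z hz k
    have hθk := hθ k
    have hμk : 0 < μh k := lt_of_lt_of_le hεμ (hμhLB k)
    have ht : 0 ≤ θ k * μh k := le_of_lt (mul_pos hθk.1 hμk)
    nlinarith [hq0 k, mul_le_mul_of_nonneg_left hlo (by positivity : (0:ℝ) ≤ 2 * (θ k * μh k))]
  have hdec0 : ∀ k, 0 ≤ θ k * (2 - θ k) * μh k ^ 2 * q k := by
    intro k
    have hθk := hθ k
    have := hq0 k
    have h2 : 0 < 2 - θ k := by linarith [hθk.2]
    exact mul_nonneg (mul_nonneg (mul_nonneg hθk.1.le h2.le) (sq_nonneg _)) (hq0 k)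
  have hfanti : ∀ z : H, -C z ∈ A z → Antitone (fd z) := by
    intro z hz
    refine antitone_nat_of_succ_le (fun k => ?_)
    have := hfstep z hz k
    linarith [hdec0 k]
  have hfconv : ∀ z : H, -C z ∈ A z → ∃ Lz : ℝ, Tendsto (fd z) atTop (nhds Lz) := by
    intro z hz
    exact ⟨_, tendsto_atTop_ciInf (hfanti z hz) ⟨0, fun r hr => by
      obtain ⟨k, rfl⟩ := hr; exact hfd0 z k⟩⟩
  obtain ⟨z₀, hz₀⟩ := hzer
  obtain ⟨L₀, hL₀⟩ := hfconv z₀ hz₀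
  -- q → 0
  have hqto : Tendsto q atTop (nhds 0) := by
    set δ : ℝ := Filter.liminf (fun k => θ k * (2 - θ k)) atTop / 2 with hδ
    have hδpos : 0 < δ := half_pos hθliminf
    have hθnn : ∀ k, 0 ≤ θ k * (2 - θ k) := fun k =>
      (mul_pos (hθ k).1 (by linarith [(hθ k).2])).le
    have hbdd : IsBoundedUnder (· ≥ ·) atTop (fun k => θ k * (2 - θ k)) :=
      ⟨0, Filter.eventually_map.mpr (Filter.Eventually.of_forall hθnn)⟩
    have hev : ∀ᶠ k in atTop, δ < θ k * (2 - θ k) :=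
      eventually_lt_of_lt_liminf (half_lt_self hθliminf) hbdd
    refine squeeze_zero' (g := fun k => (fd z₀ k - fd z₀ (k + 1)) / (δ * εμ ^ 2))
      (Filter.Eventually.of_forall hq0) ?_ ?_
    · filter_upwards [hev] with k hk
      have hst := hfstep z₀ hz₀ k
      have hμ2 : εμ ^ 2 ≤ μh k ^ 2 := by nlinarith [hμhLB k, hεμ]
      have h1 : δ * εμ ^ 2 * q k ≤ θ k * (2 - θ k) * μh k ^ 2 * q k := by
        have h2 : δ * εμ ^ 2 ≤ θ k * (2 - θ k) * μh k ^ 2 :=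
          mul_le_mul hk.le hμ2 (by positivity) (hθnn k)
        exact mul_le_mul_of_nonneg_right h2 (hq0 k)
      rw [le_div_iff₀ (by positivity : (0:ℝ) < δ * εμ ^ 2)]
      nlinarith
    · have hdiff : Tendsto (fun k => fd z₀ k - fd z₀ (k + 1)) atTop (nhds 0) := by
        have h1 : Tendsto (fun k => fd z₀ (k + 1)) atTop (nhds L₀) :=
          hL₀.comp (tendsto_add_atTop_nat 1)
        simpa using hL₀.sub h1
      simpa using hdiff.div_const (δ * εμ ^ 2)
  -- w → 0 in norm
  have hwto : Tendsto (fun k => ‖w k‖) atTop (nhds 0) :=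
    norm_tendsto_zero_of_sq_le w q cSinv hcSinv (fun k => hSinvlb (w k)) hqto
  -- x - xh → 0 in norm
  have heto : Tendsto (fun k => ‖x k - xh k‖) atTop (nhds 0) := by
    have hek : ∀ k, ‖x k - xh k‖ ≤ ‖w k‖ / cP := by
      intro k
      have h1 : cP * ‖x k - xh k‖ ^ 2 ≤ (inner ℝ (w k) (x k - xh k) : ℝ) := by
        have h2 := hPlb (x k - xh k)
        have h3 := hMsm k (x k) (xh k)
        rw [pnorm_sq_eq P _ (hPposv _)] at h3
        exact le_trans h2 h3
      have h4 : (inner ℝ (w k) (x k - xh k) : ℝ) ≤ ‖w k‖ * ‖x k - xh k‖ :=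
        real_inner_le_norm _ _
      rcases eq_or_lt_of_le (norm_nonneg (x k - xh k)) with h | h
      · rw [← h]; positivity
      · rw [le_div_iff₀ hcP]; nlinarith
    have hg : Tendsto (fun k => ‖w k‖ / cP) atTop (nhds 0) := by
      simpa using hwto.div_const cP
    exact squeeze_zero (fun k => norm_nonneg _) hek hg
  -- boundedness
  obtain ⟨Bx, hBx⟩ : ∃ Bx : ℝ, ∀ k, ‖x k‖ ≤ Bx := by
    refine ⟨‖z₀‖ + Real.sqrt (fd z₀ 0 / cS), fun k => ?_⟩
    have h1 : cS * ‖x k - z₀‖ ^ 2 ≤ fd z₀ 0 :=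
      le_trans (hSlb _) (hfanti z₀ hz₀ (Nat.zero_le k))
    have h2 : ‖x k - z₀‖ ≤ Real.sqrt (fd z₀ 0 / cS) := by
      have h3 : ‖x k - z₀‖ ^ 2 ≤ fd z₀ 0 / cS := by
        rw [le_div_iff₀ hcS]; linarith
      calc ‖x k - z₀‖ = Real.sqrt (‖x k - z₀‖ ^ 2) :=
            (Real.sqrt_sq (norm_nonneg _)).symm
        _ ≤ Real.sqrt (fd z₀ 0 / cS) := Real.sqrt_le_sqrt h3
    calc ‖x k‖ = ‖z₀ + (x k - z₀)‖ := by congr 1; abel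
      _ ≤ ‖z₀‖ + ‖x k - z₀‖ := norm_add_le _ _
      _ ≤ ‖z₀‖ + Real.sqrt (fd z₀ 0 / cS) := by linarith
  obtain ⟨Bxh, hBxh⟩ : ∃ Bxh : ℝ, ∀ k, ‖xh k‖ ≤ Bxh := by
    obtain ⟨E, hE⟩ := heto.bddAbove_range
    refine ⟨Bx + E, fun k => ?_⟩
    have h1 : ‖x k - xh k‖ ≤ E := hE (Set.mem_range_self k)
    calc ‖xh k‖ = ‖x k - (x k - xh k)‖ := by congr 1; abel
      _ ≤ ‖x k‖ + ‖x k - xh k‖ := norm_sub_le _ _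
      _ ≤ Bx + E := add_le_add (hBx k) h1
  -- every ultrafilter cluster point is a zero
  have hBx0 : 0 ≤ Bx := (norm_nonneg _).trans (hBx 0)
  have hcluster : ∀ U : Ultrafilter ℕ, (U : Filter ℕ) ≤ atTop →
      ∃ p : H, -C p ∈ A p ∧
        ∀ y : H, Tendsto (fun k => (inner ℝ (x k) y : ℝ)) (U : Filter ℕ)
          (nhds (inner ℝ p y)) := by
    intro U hU
    obtain ⟨p, hp⟩ := exists_weak_ultrafilter_limit U x Bx hBx
    refine ⟨p, ?_, hp⟩
    have hwU : Tendsto (fun k => ‖w k‖) (U : Filter ℕ) (nhds 0) := hwto.mono_left hU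
    have heU : Tendsto (fun k => ‖x k - xh k‖) (U : Filter ℕ) (nhds 0) :=
      heto.mono_left hU
    -- weak convergence of xh along U
    have hxhw : ∀ y : H, Tendsto (fun k => (inner ℝ (xh k) y : ℝ)) (U : Filter ℕ)
        (nhds (inner ℝ p y)) := by
      intro y
      have h1 : Tendsto (fun k => (inner ℝ (x k - xh k) y : ℝ)) (U : Filter ℕ)
          (nhds 0) := by
        refine squeeze_zero_norm (fun k => ?_) (by simpa using heU.mul_const ‖y‖)
        exact abs_real_inner_le_norm _ _
      have h2 := (hp y).sub h1
      have h3 : (fun k => (inner ℝ (x k) y : ℝ) - inner ℝ (x k - xh k) y)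
          = fun k => (inner ℝ (xh k) y : ℝ) := by
        funext k
        rw [inner_sub_left]
        ring
      rw [h3] at h2
      simpa using h2
    rcases lt_or_eq_of_le hβ0 with hβpos | hβzero
    · -- β > 0
      set d : ℕ → H := fun k => C (x k) - C p with hd
      set BB : ℝ := β * (Bx + ‖p‖) / cPinv with hBB
      have hBB0 : 0 ≤ BB := by positivity
      have hdb : ∀ k, ‖d k‖ ≤ BB := by
        intro k
        have h1 : cPinv * ‖d k‖ ^ 2 ≤ (inner ℝ (d k) (Pinv (d k)) : ℝ) := hPinvlb _
        have h2 : (inner ℝ (d k) (Pinv (d k)) : ℝ) = pnorm Pinv (d k) ^ 2 :=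
          (pnorm_sq_eq Pinv _ (hPinvposv _)).symm
        have h3 : (1 / β) * pnorm Pinv (d k) ^ 2 ≤ (inner ℝ (d k) (x k - p) : ℝ) :=
          hCpos hβpos (x k) p
        have h4 : (inner ℝ (d k) (x k - p) : ℝ) ≤ ‖d k‖ * ‖x k - p‖ :=
          real_inner_le_norm _ _
        have h5 : ‖x k - p‖ ≤ Bx + ‖p‖ :=
          (norm_sub_le _ _).trans (add_le_add_left (hBx k) _)
        have h6 : pnorm Pinv (d k) ^ 2 ≤ β * (inner ℝ (d k) (x k - p) : ℝ) := by
          have h7 := mul_le_mul_of_nonneg_left h3 hβpos.le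
          have h8 : β * ((1 / β) * pnorm Pinv (d k) ^ 2) = pnorm Pinv (d k) ^ 2 := by
            field_simp
          exact h8 ▸ h7
        rcases eq_or_lt_of_le (norm_nonneg (d k)) with h | h
        · rw [← h]; positivity
        · rw [hBB, le_div_iff₀ hcPinv]
          have h9 : (inner ℝ (d k) (x k - p) : ℝ) ≤ ‖d k‖ * (Bx + ‖p‖) :=
            h4.trans (mul_le_mul_of_nonneg_left h5 (norm_nonneg _))
          nlinarith [h1, h2, h6, h9, h]
      obtain ⟨dL, hdL⟩ := exists_weak_ultrafilter_limit U d BB hdb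
      set r : ℕ → ℝ := fun k => (inner ℝ (d k) (Pinv (d k)) : ℝ) with hr
      have hr0 : ∀ k, 0 ≤ r k := fun k => hPinvposv _
      have hrb : ∀ k, |r k| ≤ BB * (‖Pinv‖ * BB) := by
        intro k
        calc |r k| ≤ ‖d k‖ * ‖Pinv (d k)‖ := abs_real_inner_le_norm _ _
          _ ≤ BB * (‖Pinv‖ * BB) := by
              refine mul_le_mul (hdb k) ?_ (norm_nonneg _) hBB0
              exact (Pinv.le_opNorm _).trans
                (mul_le_mul_of_nonneg_left (hdb k) (norm_nonneg _))
      obtain ⟨L, hLb, hLto⟩ := ultrafilter_limit_bounded U r _ hrb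
      have hL0 : 0 ≤ L := ge_of_tendsto' hLto hr0
      have hrpn : ∀ k, (1 / β) * r k ≤ (inner ℝ (d k) (x k - p) : ℝ) := by
        intro k
        have h3 : (1 / β) * pnorm Pinv (C (x k) - C p) ^ 2
            ≤ (inner ℝ (C (x k) - C p) ((x k) - p) : ℝ) := hCpos hβpos (x k) p
        have h2 : pnorm Pinv (d k) ^ 2 = r k := pnorm_sq_eq Pinv _ (hPinvposv _)
        rw [← h2]
        exact h3
      have hclaimA : ∀ y v : H, v ∈ A y →
          (1 / β) * L ≤ (inner ℝ (-C p - dL - v) (p - y) : ℝ) := by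
        intro y v hv
        have hbb : ∀ k, ‖xh k - y‖ ≤ Bxh + ‖y‖ := fun k =>
          (norm_sub_le _ _).trans (add_le_add_left (hBxh k) _)
        have hbw : ∀ y' : H, Tendsto (fun k => (inner ℝ (xh k - y) y' : ℝ))
            (U : Filter ℕ) (nhds (inner ℝ (p - y) y')) := by
          intro y'
          have h1 := (hxhw y').sub
            (tendsto_const_nhds (x := (inner ℝ y y' : ℝ)) (f := (U : Filter ℕ)))
          simpa [inner_sub_left] using h1
        have hkey : ∀ k, (0:ℝ) ≤ inner ℝ (w k) (xh k - y) - inner ℝ (d k) (xh k - x k)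
            - 1 / β * r k - inner ℝ (d k) (p - y) - inner ℝ (C p + v) (xh k - y) := by
          intro k
          have h1 := hA.1 (hxh k) hv
          have h2 : M k (x k) - C (x k) - M k (xh k) - v = w k - d k - (C p + v) := by
            rw [hw, hd]
            dsimp only
            abel
          rw [h2] at h1
          have h3 : (inner ℝ (w k - d k - (C p + v)) (xh k - y) : ℝ)
              = inner ℝ (w k) (xh k - y) - inner ℝ (d k) (xh k - y)
                - inner ℝ (C p + v) (xh k - y) := by
            rw [inner_sub_left, inner_sub_left]
          have h4 : (inner ℝ (d k) (xh k - y) : ℝ) = inner ℝ (d k) (xh k - x k)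
              + inner ℝ (d k) (x k - p) + inner ℝ (d k) (p - y) := by
            rw [← inner_add_right, ← inner_add_right]
            congr 1
            abel
          have h5 := hrpn k
          rw [h3, h4] at h1
          linarith
        have hg1 : Tendsto (fun k => (inner ℝ (w k) (xh k - y) : ℝ)) (U : Filter ℕ)
            (nhds 0) := by
          have := inner_tendsto_of_strong_weak w (fun k => xh k - y) 0 (p - y)
            (Bxh + ‖y‖) hbb (by simpa using hwU) hbw
          simpa using this
        have hg2 : Tendsto (fun k => (inner ℝ (d k) (xh k - x k) : ℝ)) (U : Filter ℕ)
            (nhds 0) := by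
          have ha : Tendsto (fun k => ‖(xh k - x k) - 0‖) (U : Filter ℕ) (nhds 0) := by
            simpa [norm_sub_rev] using heU
          have := inner_tendsto_of_strong_weak (fun k => xh k - x k) d 0 dL BB hdb ha hdL
          have h2 := this.congr (fun k => real_inner_comm _ _)
          simpa using h2
        have hg3 : Tendsto (fun k => 1 / β * r k) (U : Filter ℕ)
            (nhds (1 / β * L)) := hLto.const_mul _
        have hg4 : Tendsto (fun k => (inner ℝ (d k) (p - y) : ℝ)) (U : Filter ℕ)
            (nhds (inner ℝ dL (p - y))) := hdL _
        have hg5 : Tendsto (fun k => (inner ℝ (C p + v) (xh k - y) : ℝ)) (U : Filter ℕ)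
            (nhds (inner ℝ (C p + v) (p - y))) := by
          have h1 := (hbw (C p + v)).congr (fun k => real_inner_comm _ _)
          rwa [real_inner_comm] at h1
        have hGlim := (((hg1.sub hg2).sub hg3).sub hg4).sub hg5
        have hG0 : (0:ℝ) ≤ 0 - 0 - 1 / β * L - inner ℝ dL (p - y)
            - inner ℝ (C p + v) (p - y) := ge_of_tendsto' hGlim hkey
        have hexp : (inner ℝ (-C p - dL - v) (p - y) : ℝ)
            = -(inner ℝ dL (p - y)) - inner ℝ (C p + v) (p - y) := by
          rw [show -C p - dL - v = -dL - (C p + v) from by abel,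
            inner_sub_left, inner_neg_left]
        rw [hexp]
        linarith
      have hmemL : -C p - dL ∈ A p :=
        hA.2 p _ (fun y v hv =>
          le_trans (mul_nonneg (by positivity) hL0) (hclaimA y v hv))
      have hLle : L ≤ 0 := by
        have h1 := hclaimA p (-C p - dL) hmemL
        have h2 : (inner ℝ (-C p - dL - (-C p - dL)) (p - p) : ℝ) = 0 := by simp
        rw [h2] at h1
        nlinarith [one_div_pos.mpr hβpos]
      have hLeq : L = 0 := le_antisymm hLle hL0
      have hdto : Tendsto (fun k => ‖d k‖) (U : Filter ℕ) (nhds 0) :=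
        norm_tendsto_zero_of_sq_le d r cPinv hcPinv (fun k => hPinvlb _)
          (hLeq ▸ hLto)
      have hdL0 : dL = 0 := by
        have h1 : Tendsto (fun k => (inner ℝ (d k) dL : ℝ)) (U : Filter ℕ) (nhds 0) := by
          refine squeeze_zero_norm (fun k => ?_) (by simpa using hdto.mul_const ‖dL‖)
          exact abs_real_inner_le_norm _ _
        have h2 := tendsto_nhds_unique (hdL dL) h1
        exact inner_self_eq_zero.mp h2
      rw [hdL0, sub_zero] at hmemL
      exact hmemL
    · -- β = 0
      have hCc : ∀ a : H, C a = C p := fun a => hC0 hβzero.symm a p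
      apply hA.2
      intro y v hv
      have hbb : ∀ k, ‖xh k - y‖ ≤ Bxh + ‖y‖ := fun k =>
        (norm_sub_le _ _).trans (add_le_add_left (hBxh k) _)
      have hbw : ∀ y' : H, Tendsto (fun k => (inner ℝ (xh k - y) y' : ℝ))
          (U : Filter ℕ) (nhds (inner ℝ (p - y) y')) := by
        intro y'
        have h1 := (hxhw y').sub
          (tendsto_const_nhds (x := (inner ℝ y y' : ℝ)) (f := (U : Filter ℕ)))
        simpa [inner_sub_left] using h1
      have hkey : ∀ k, (0:ℝ) ≤ inner ℝ (w k - C p - v) (xh k - y) := by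
        intro k
        have h1 := hA.1 (hxh k) hv
        have h2 : M k (x k) - C (x k) - M k (xh k) - v = w k - C p - v := by
          rw [hw]
          dsimp only
          rw [hCc (x k)]
          abel
        rwa [h2] at h1
      have ha : Tendsto (fun k => ‖(w k - C p - v) - (-C p - v)‖) (U : Filter ℕ)
          (nhds 0) := by
        have h1 : ∀ k, (w k - C p - v) - (-C p - v) = w k := fun k => by abel
        simpa [h1] using hwU
      have hlim := inner_tendsto_of_strong_weak (fun k => w k - C p - v)
        (fun k => xh k - y) (-C p - v) (p - y) (Bxh + ‖y‖) hbb ha hbw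
      exact ge_of_tendsto' hlim hkey
  -- Opial-type uniqueness and conclusion
  obtain ⟨p, hpz, hpw⟩ := hcluster (Ultrafilter.of atTop) (Ultrafilter.of_le _)
  refine ⟨p, hpz, ?_⟩
  intro y
  rw [tendsto_iff_ultrafilter]
  intro U hU
  obtain ⟨p', hp'z, hp'w⟩ := hcluster U hU
  obtain ⟨Lp, hLp⟩ := hfconv p hpz
  obtain ⟨Lp', hLp'⟩ := hfconv p' hp'z
  set m : ℝ := ((inner ℝ p (S p) : ℝ) - inner ℝ p' (S p') - (Lp - Lp')) / 2 with hm
  have hkey : ∀ z : H, ∀ k, fd z k = (inner ℝ (x k) (S (x k)) : ℝ)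
      - 2 * inner ℝ (x k) (S z) + inner ℝ z (S z) := by
    intro z k
    rw [hfd]
    dsimp only
    rw [map_sub, inner_sub_left, inner_sub_right, inner_sub_right]
    have h1 : (inner ℝ z (S (x k)) : ℝ) = inner ℝ (x k) (S z) := by
      rw [← hSsymm z (x k), real_inner_comm]
    rw [h1]
    ring
  have hdiffty : Tendsto (fun k => (inner ℝ (x k) (S (p - p')) : ℝ)) atTop (nhds m) := by
    have h1 : Tendsto (fun k => fd p k - fd p' k) atTop (nhds (Lp - Lp')) :=
      hLp.sub hLp'
    have h2 : (fun k => ((inner ℝ p (S p) : ℝ) - (inner ℝ p' (S p') : ℝ)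
        - (fd p k - fd p' k)) / 2)
        = fun k => (inner ℝ (x k) (S (p - p')) : ℝ) := by
      funext k
      rw [hkey p k, hkey p' k, map_sub, inner_sub_right]
      ring
    have h3 := ((tendsto_const_nhds
      (x := (inner ℝ p (S p) : ℝ) - (inner ℝ p' (S p') : ℝ))
      (f := (atTop : Filter ℕ))).sub h1).div_const 2
    rw [h2] at h3
    exact h3
  have hq1 : (inner ℝ p (S (p - p')) : ℝ) = m :=
    tendsto_nhds_unique (hpw (S (p - p')))
      (hdiffty.mono_left (Ultrafilter.of_le _))
  have hq2 : (inner ℝ p' (S (p - p')) : ℝ) = m :=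
    tendsto_nhds_unique (hp'w (S (p - p'))) (hdiffty.mono_left hU)
  have hpp : p' = p := by
    have h1 : (inner ℝ (p - p') (S (p - p')) : ℝ) = 0 := by
      rw [inner_sub_left, hq1, hq2]
      ring
    have h2 := hSlb (p - p')
    have h3 : ‖p - p'‖ ^ 2 ≤ 0 := by nlinarith
    have h4 : p - p' = 0 := by
      have h5 : ‖p - p'‖ = 0 := by nlinarith [norm_nonneg (p - p'), sq_nonneg ‖p - p'‖]
      exact norm_eq_zero.mp h5
    have := sub_eq_zero.mp h4
    exact this.symm
  rw [← hpp]
  exact hp'w y
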